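/- Let x⁽¹⁾,…,x⁽ⁿ⁺¹⁾ be affinely independent points in the closed unit ball B_n of ℝⁿ, and let c = (1/(n+1))·Σ_{j=1}^{n+1} x⁽ʲ⁾ be their centroid. Then there exists an index j ∈ {1,…,n+1} such that ‖2c − x⁽ʲ⁾‖ ≤ 1, i.e., the reflection of the vertex x⁽ʲ⁾ through c again lies in B_n. -/

import Mathlib

theorem exists_vertex_with_reflection_in_ball
    {n : ℕ}
    (x : Fin (n + 1) → EuclideanSpace ℝ (Fin n))
    (hind : AffineIndependent ℝ x)
    (hx : ∀ j, x j ∈ Metric.closedBall (0 : EuclideanSpace ℝ (Fin n)) 1)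
    (c : EuclideanSpace ℝ (Fin n))
    (hc : c = (((n : ℝ) + 1)⁻¹) • ∑ j, x j) :
    ∃ j, ‖(2 : ℝ) • c - x j‖ ≤ 1 := by
  have hnpos : (0 : ℝ) < (n : ℝ) + 1 := by positivity
  have hsum : ∑ j, (inner ℝ c (x j) : ℝ) = ((n : ℝ) + 1) * ‖c‖ ^ 2 := by
    rw [← inner_sum]
    have hxs : (∑ j, x j) = ((n : ℝ) + 1) • c := by
      rw [hc, smul_smul, mul_inv_cancel₀ (ne_of_gt hnpos), one_smul]
    rw [hxs, real_inner_smul_right, real_inner_self_eq_norm_sq]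
  -- there is j with inner c (x j) ≥ ‖c‖^2
  have hexists : ∃ j, ‖c‖ ^ 2 ≤ (inner ℝ c (x j) : ℝ) := by
    by_contra h
    push_neg at h
    have : ∑ j, (inner ℝ c (x j) : ℝ) < ∑ j : Fin (n + 1), ‖c‖ ^ 2 :=
      Finset.sum_lt_sum_of_nonempty Finset.univ_nonempty (fun j _ => h j)
    rw [hsum, Finset.sum_const, Finset.card_univ, Fintype.card_fin,
      nsmul_eq_mul] at this
    push_cast at this
    linarith
  obtain ⟨j, hj⟩ := hexists
  refine ⟨j, ?_⟩
  have hxj : ‖x j‖ ≤ 1 := by simpa using hx j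
  have hsq : ‖(2 : ℝ) • c - x j‖ ^ 2 ≤ 1 := by
    rw [norm_sub_sq_real, norm_smul, real_inner_smul_left]
    simp only [Real.norm_ofNat]
    nlinarith [norm_nonneg (x j)]
  nlinarith [norm_nonneg ((2 : ℝ) • c - x j)]
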